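/- Let $(K_i)_{i \in \mathbb{N}}$ be an i.i.d. sequence of random variables with values in the positive integers, with $\Pr(K_i = k) = k^{-5/4}/c$ for every $k \geq 1$, where $c = \sum_{k \geq 1} k^{-5/4}$. Then for almost every trajectory $(k_i)$ there is a number $i_0$ such that: (1) every record time $i \geq i_0$ is simple, and (2) $\max\{k_1, \ldots, k_i\} > i$ for all $i \geq i_0$. -/

import Mathlib

open MeasureTheory ProbabilityTheory Filter
open scoped ENNReal
set_option maxHeartbeats 1000000

lemma aux_exp {t : ℝ} (ht : 0 < t) : Real.exp (-t) ≤ 27 / t ^ 3 := by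
  have h1 : t / 3 + 1 ≤ Real.exp (t / 3) := Real.add_one_le_exp _
  have h2 : (t / 3) ^ 3 ≤ Real.exp (t / 3) ^ 3 :=
    pow_le_pow_left₀ (by positivity) (by linarith) 3
  have h3 : Real.exp (t / 3) ^ 3 = Real.exp t := by
    rw [← Real.exp_nat_mul]; ring_nf
  have h4 : (Real.exp t)⁻¹ ≤ ((t / 3) ^ 3)⁻¹ := by
    apply inv_anti₀ (by positivity)
    rw [← h3]; exact h2
  rw [Real.exp_neg]
  calc (Real.exp t)⁻¹ ≤ ((t / 3) ^ 3)⁻¹ := h4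
    _ = 27 / t ^ 3 := by field_simp; ring

lemma aux_geom {y : ℝ} (h0 : 0 ≤ y) (h1 : y < 1) :
    ∑' j : ℕ, (j : ℝ≥0∞) * (ENNReal.ofReal y) ^ (j - 1) ≤
      ENNReal.ofReal (2 * (1 - y)⁻¹) ^ 2 := by
  set s := Real.sqrt y with hs
  have hs0 : 0 ≤ s := Real.sqrt_nonneg y
  have hs1 : s < 1 := by
    rw [hs, show (1:ℝ) = Real.sqrt 1 by simp]
    exact Real.sqrt_lt_sqrt h0 h1
  have hss : s * s = y := Real.mul_self_sqrt h0
  set S := ENNReal.ofReal s with hS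
  have hS1 : S ≤ 1 := ENNReal.ofReal_le_one.mpr hs1.le
  have hxSS : ENNReal.ofReal y = S * S := by rw [hS, ← ENNReal.ofReal_mul hs0, hss]
  have key : ∀ n : ℕ, ((n + 1 : ℕ) : ℝ≥0∞) * S ^ n ≤ (1 - S)⁻¹ := by
    intro n
    calc ((n + 1 : ℕ) : ℝ≥0∞) * S ^ n = ∑ _k ∈ Finset.range (n + 1), S ^ n := by
          rw [Finset.sum_const, Finset.card_range, nsmul_eq_mul]
      _ ≤ ∑ k ∈ Finset.range (n + 1), S ^ k := by
          refine Finset.sum_le_sum fun k hk => ?_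
          exact pow_le_pow_right_of_le_one' hS1 (Nat.lt_succ_iff.mp (Finset.mem_range.mp hk))
      _ ≤ ∑' k : ℕ, S ^ k := ENNReal.sum_le_tsum _
      _ = (1 - S)⁻¹ := ENNReal.tsum_geometric S
  have hbound : (1 - S)⁻¹ ≤ ENNReal.ofReal (2 * (1 - y)⁻¹) := by
    have h1S : (1 : ℝ≥0∞) - S = ENNReal.ofReal (1 - s) := by
      rw [ENNReal.ofReal_sub _ hs0, ENNReal.ofReal_one]
    have hinv : (ENNReal.ofReal (1 - s))⁻¹ = ENNReal.ofReal ((1 - s)⁻¹) :=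
      (ENNReal.ofReal_inv_of_pos (by linarith)).symm
    have hle : (1 - s)⁻¹ ≤ 2 * (1 - y)⁻¹ := by
      have e : (2 : ℝ) * (1 - y)⁻¹ = ((1 - y) / 2)⁻¹ := by
        rw [inv_div]; ring
      rw [e]
      exact inv_anti₀ (by linarith) (by nlinarith)
    rw [h1S, hinv]
    exact ENNReal.ofReal_le_ofReal hle
  calc ∑' j : ℕ, (j : ℝ≥0∞) * (ENNReal.ofReal y) ^ (j - 1)
      = ∑' n : ℕ, ((n + 1 : ℕ) : ℝ≥0∞) * (ENNReal.ofReal y) ^ n := by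
        rw [tsum_eq_zero_add' ENNReal.summable]
        simp
    _ ≤ ∑' n : ℕ, (1 - S)⁻¹ * S ^ n := by
        refine Summable.tsum_le_tsum (fun n => ?_) ENNReal.summable ENNReal.summable
        rw [hxSS, mul_pow, ← mul_assoc]
        exact mul_le_mul_left (key n) _
    _ = (1 - S)⁻¹ * (1 - S)⁻¹ := by rw [ENNReal.tsum_mul_left, ENNReal.tsum_geometric]
    _ ≤ ENNReal.ofReal (2 * (1 - y)⁻¹) ^ 2 := by
        rw [sq]; exact mul_le_mul' hbound hbound





open MeasureTheory ProbabilityTheory Filter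

/-- `i` is a record time of the sequence `k` if `k j < k i` for all `j < i`. -/
def IsRecordTime (k : ℕ → ℕ) (i : ℕ) : Prop := ∀ j < i, k j < k i

/-- `i` is a non-strict record time of `k` if `k j ≤ k i` for all `j < i`. -/
def IsNonStrictRecordTime (k : ℕ → ℕ) (i : ℕ) : Prop := ∀ j < i, k j ≤ k i

/-- A record time `i` is simple if `k i < k j` for all non-strict record times `j > i`. -/
def IsSimpleRecordTime (k : ℕ → ℕ) (i : ℕ) : Prop :=
  IsRecordTime k i ∧ ∀ j > i, IsNonStrictRecordTime k j → k i < k j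

/-- For an i.i.d. sequence `(K_i)` of positive-integer-valued random variables with
`Pr(K_i = k) = k^(-5/4)/c`, almost surely there is `i₀` such that every record time
`i ≥ i₀` is simple and `max{k_0, …, k_i} > i` for all `i ≥ i₀`. -/
theorem records_eventually_simple_and_large
    {Ω : Type*} [MeasurableSpace Ω] (μ : Measure Ω) [IsProbabilityMeasure μ]
    (c : ℝ) (hc : c = ∑' k : ℕ, (k : ℝ) ^ (-(5 / 4 : ℝ)))
    (K : ℕ → Ω → ℕ) (hmeas : ∀ i, Measurable (K i))
    (hpos : ∀ i ω, 1 ≤ K i ω)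
    (hindep : iIndepFun K μ)
    (hdist : ∀ i, ∀ k : ℕ, 1 ≤ k →
      μ {ω | K i ω = k} = ENNReal.ofReal ((k : ℝ) ^ (-(5 / 4 : ℝ)) / c)) :
    ∀ᵐ ω ∂μ, ∃ i₀ : ℕ, ∀ i ≥ i₀,
      (IsRecordTime (fun n => K n ω) i → IsSimpleRecordTime (fun n => K n ω) i) ∧
      (∃ j ≤ i, i < K j ω) := by
  have hterm_nonneg : ∀ k : ℕ, 0 ≤ (k : ℝ) ^ (-(5/4 : ℝ)) :=
    fun k => Real.rpow_nonneg (Nat.cast_nonneg k) _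
  have hsum : Summable (fun k : ℕ => (k : ℝ) ^ (-(5/4 : ℝ))) :=
    Real.summable_nat_rpow.mpr (by norm_num)
  have hc1 : 1 ≤ c := by
    have := Summable.le_tsum hsum 1 (fun k _ => hterm_nonneg k)
    rw [← hc] at this
    simpa using this
  have hc0 : (0:ℝ) < c := lt_of_lt_of_le one_pos hc1
  -- the CDF value
  set F : ℕ → ℝ := fun m => (∑ k ∈ Finset.Icc 1 m, (k : ℝ) ^ (-(5/4 : ℝ))) / c with hFdef
  have hF_nonneg : ∀ m, 0 ≤ F m := fun m =>
    div_nonneg (Finset.sum_nonneg fun k _ => hterm_nonneg k) hc0.le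
  have hF_le_one : ∀ m, F m ≤ 1 := by
    intro m
    rw [hFdef, div_le_one hc0, hc]
    exact Summable.sum_le_tsum _ (fun k _ => hterm_nonneg k) hsum
  -- splitting off the first m+1 terms
  have hrange_eq : ∀ m : ℕ, (∑ k ∈ Finset.range (m+1), (k : ℝ) ^ (-(5/4 : ℝ)))
      = ∑ k ∈ Finset.Icc 1 m, (k : ℝ) ^ (-(5/4 : ℝ)) := by
    intro m
    have h0 : Finset.range (m+1) = insert 0 (Finset.Icc 1 m) := by
      ext k; simp [Finset.mem_range, Finset.mem_Icc]; omega
    rw [h0, Finset.sum_insert (by simp)]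
    simp [Real.zero_rpow (by norm_num : (-(5/4:ℝ)) ≠ 0)]
  have htail : ∀ m : ℕ,
      (∑ k ∈ Finset.Icc 1 m, (k : ℝ) ^ (-(5/4 : ℝ)))
        + (∑' k : ℕ, ((k + (m+1) : ℕ) : ℝ) ^ (-(5/4 : ℝ))) = c := by
    intro m
    rw [← hrange_eq m, hc]
    exact (Summable.sum_add_tsum_nat_add (m+1) hsum)
  -- tail lower bound
  have htail_lb : ∀ m : ℕ, 1 ≤ m →
      (2:ℝ) ^ (-(5/4:ℝ)) / c * (m:ℝ) ^ (-(1/4:ℝ)) ≤ 1 - F m := by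
    intro m hm
    have hm0 : (0:ℝ) < (m:ℝ) := by exact_mod_cast hm
    have h1 : (m:ℝ) * ((2*m : ℝ)) ^ (-(5/4:ℝ))
        ≤ ∑' k : ℕ, ((k + (m+1) : ℕ) : ℝ) ^ (-(5/4 : ℝ)) := by
      have hsum' : Summable (fun k : ℕ => ((k + (m+1) : ℕ) : ℝ) ^ (-(5/4 : ℝ))) := by
        exact_mod_cast (summable_nat_add_iff (f := fun k : ℕ => (k : ℝ) ^ (-(5/4:ℝ))) (m+1)).mpr hsum
      calc (m:ℝ) * ((2*m : ℝ)) ^ (-(5/4:ℝ))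
          = ∑ _k ∈ Finset.range m, ((2*m : ℝ)) ^ (-(5/4:ℝ)) := by
            rw [Finset.sum_const, Finset.card_range, nsmul_eq_mul]
        _ ≤ ∑ k ∈ Finset.range m, ((k + (m+1) : ℕ) : ℝ) ^ (-(5/4 : ℝ)) := by
            refine Finset.sum_le_sum fun k hk => ?_
            have hk' : k < m := Finset.mem_range.mp hk
            refine Real.rpow_le_rpow_of_nonpos ?_ ?_ (by norm_num)
            · positivity
            · have hkr : (k:ℝ) + 1 ≤ (m:ℝ) := by exact_mod_cast hk'
              push_cast
              linarith
        _ ≤ ∑' k : ℕ, ((k + (m+1) : ℕ) : ℝ) ^ (-(5/4 : ℝ)) :=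
            Summable.sum_le_tsum _ (fun k _ => hterm_nonneg _) hsum'
    have h2 : ((2*m : ℝ)) ^ (-(5/4:ℝ)) = (2:ℝ) ^ (-(5/4:ℝ)) * (m:ℝ) ^ (-(5/4:ℝ)) :=
      Real.mul_rpow (by norm_num) hm0.le
    have h3 : (m:ℝ) * (m:ℝ) ^ (-(5/4:ℝ)) = (m:ℝ) ^ (-(1/4:ℝ)) := by
      rw [show (m:ℝ) * (m:ℝ) ^ (-(5/4:ℝ)) = (m:ℝ) ^ (1:ℝ) * (m:ℝ) ^ (-(5/4:ℝ)) by
        rw [Real.rpow_one], ← Real.rpow_add hm0]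
      norm_num
    have h4 : 1 - F m = (∑' k : ℕ, ((k + (m+1) : ℕ) : ℝ) ^ (-(5/4 : ℝ))) / c := by
      have ht := htail m
      rw [hFdef]
      simp only []
      rw [eq_div_iff hc0.ne', sub_mul, one_mul, div_mul_cancel₀ _ hc0.ne']
      linarith
    rw [h4]
    rw [div_mul_eq_mul_div, div_le_div_iff_of_pos_right hc0]
    calc (2:ℝ) ^ (-(5/4:ℝ)) * (m:ℝ) ^ (-(1/4:ℝ))
        = (m:ℝ) * ((2*m:ℝ)) ^ (-(5/4:ℝ)) := by rw [h2, ← h3]; ring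
      _ ≤ _ := h1
  -- measure of the CDF events
  have hcdf : ∀ l m : ℕ, μ (K l ⁻¹' Set.Iic m) = ENNReal.ofReal (F m) := by
    intro l m
    have hset : K l ⁻¹' Set.Iic m = ⋃ k ∈ Finset.Icc 1 m, {ω | K l ω = k} := by
      ext ω
      simp only [Set.mem_preimage, Set.mem_Iic, Set.mem_iUnion, Set.mem_setOf_eq,
        Finset.mem_Icc, exists_prop]
      constructor
      · intro h; exact ⟨K l ω, ⟨hpos l ω, h⟩, rfl⟩
      · rintro ⟨k, ⟨-, hk⟩, rfl⟩; exact hk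
    rw [hset, measure_biUnion_finset ?_ ?_]
    · rw [Finset.sum_congr rfl (fun k hk => hdist l k (Finset.mem_Icc.mp hk).1),
        ← ENNReal.ofReal_sum_of_nonneg (fun k _ => div_nonneg (hterm_nonneg k) hc0.le),
        ← Finset.sum_div]
    · intro k _ k' _ hkk'
      simp only [Set.disjoint_left, Set.mem_setOf_eq]
      intro ω h1 h2; exact hkk' (h1 ▸ h2 ▸ rfl)
    · intro k _
      exact (hmeas l) (measurableSet_singleton k)
  -- C events
  set Cset : ℕ → Set Ω := fun i => {ω | ∀ l ≤ i, K l ω ≤ i} with hCdef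
  have hCmeasure : ∀ i, μ (Cset i) = ENNReal.ofReal (F i) ^ (i+1) := by
    intro i
    have hset : Cset i = ⋂ l ∈ Finset.range (i+1), K l ⁻¹' Set.Iic i := by
      ext ω
      simp [hCdef, Nat.lt_succ_iff]
    rw [hset, hindep.measure_inter_preimage_eq_mul (Finset.range (i+1))
      (sets := fun _ => Set.Iic i) (fun l _ => measurableSet_Iic)]
    simp [hcdf, Finset.prod_const, Finset.card_range]
  have hF0 : F 0 = 0 := by simp [hFdef]
  set δ : ℝ := (2:ℝ) ^ (-(5/4:ℝ)) / c with hδdef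
  have hδ0 : 0 < δ := div_pos (Real.rpow_pos_of_pos two_pos _) hc0
  have hCbound : ∀ i : ℕ, μ (Cset i) ≤ ENNReal.ofReal (27 / δ^3 * (i:ℝ) ^ (-(2:ℝ))) := by
    intro i
    rcases Nat.eq_zero_or_pos i with hi | hi
    · subst hi
      rw [hCmeasure 0, hF0]
      simp
    · have hi0 : (0:ℝ) < (i:ℝ) := by exact_mod_cast hi
      have hi1 : (1:ℝ) ≤ (i:ℝ) := by exact_mod_cast hi
      rw [hCmeasure i, ← ENNReal.ofReal_pow (hF_nonneg i)]
      apply ENNReal.ofReal_le_ofReal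
      have hx0 : (0:ℝ) < δ * (i:ℝ)^(-(1/4:ℝ)) :=
        mul_pos hδ0 (Real.rpow_pos_of_pos hi0 _)
      have h5 : F i ≤ Real.exp (-(δ * (i:ℝ)^(-(1/4:ℝ)))) := by
        have ha := htail_lb i hi
        have hb := Real.add_one_le_exp (-(δ * (i:ℝ)^(-(1/4:ℝ))))
        rw [hδdef]
        linarith
      have h6 : F i ^ (i+1) ≤ Real.exp (-(δ * (i:ℝ)^(-(1/4:ℝ)))) ^ (i+1) :=
        pow_le_pow_left₀ (hF_nonneg i) h5 _
      have h7 : Real.exp (-(δ * (i:ℝ)^(-(1/4:ℝ)))) ^ (i+1)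
          = Real.exp (-(δ * (i:ℝ)^(-(1/4:ℝ)) * ((i:ℝ)+1))) := by
        rw [← Real.exp_nat_mul]
        push_cast
        ring_nf
      have h34 : (i:ℝ) * (i:ℝ)^(-(1/4:ℝ)) = (i:ℝ)^((3:ℝ)/4) := by
        rw [show (i:ℝ) * (i:ℝ)^(-(1/4:ℝ)) = (i:ℝ)^(1:ℝ) * (i:ℝ)^(-(1/4:ℝ)) by
          rw [Real.rpow_one], ← Real.rpow_add hi0]
        norm_num
      have h8 : δ * (i:ℝ)^((3:ℝ)/4) ≤ δ * (i:ℝ)^(-(1/4:ℝ)) * ((i:ℝ)+1) := by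
        rw [← h34]
        have hr0 : (0:ℝ) ≤ (i:ℝ)^(-(1/4:ℝ)) := Real.rpow_nonneg hi0.le _
        nlinarith [hδ0.le]
      have h9 : Real.exp (-(δ * (i:ℝ)^(-(1/4:ℝ)) * ((i:ℝ)+1)))
          ≤ Real.exp (-(δ * (i:ℝ)^((3:ℝ)/4))) := by
        apply Real.exp_le_exp.mpr
        linarith
      have ht0 : (0:ℝ) < δ * (i:ℝ)^((3:ℝ)/4) :=
        mul_pos hδ0 (Real.rpow_pos_of_pos hi0 _)
      have h10 := aux_exp ht0
      have h94 : ((i:ℝ)^((3:ℝ)/4))^(3:ℕ) = (i:ℝ)^((9:ℝ)/4) := by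
        rw [← Real.rpow_natCast ((i:ℝ)^((3:ℝ)/4)) 3, ← Real.rpow_mul hi0.le]
        norm_num
      have h11 : 27 / (δ * (i:ℝ)^((3:ℝ)/4))^3 ≤ 27/δ^3 * (i:ℝ)^(-(2:ℝ)) := by
        rw [mul_pow, h94]
        have e1 : (i:ℝ)^(-(9:ℝ)/4) ≤ (i:ℝ)^(-(2:ℝ)) :=
          Real.rpow_le_rpow_of_exponent_le hi1 (by norm_num)
        have e2 : 27 / (δ^3 * (i:ℝ)^((9:ℝ)/4)) = 27/δ^3 * (i:ℝ)^(-(9:ℝ)/4) := by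
          rw [show -(9:ℝ)/4 = -((9:ℝ)/4) by norm_num, Real.rpow_neg hi0.le]
          field_simp
        rw [e2]
        have h27 : (0:ℝ) ≤ 27/δ^3 := div_nonneg (by norm_num) (pow_nonneg hδ0.le 3)
        exact mul_le_mul_of_nonneg_left e1 h27
      calc F i ^ (i+1) ≤ Real.exp (-(δ * (i:ℝ)^(-(1/4:ℝ)))) ^ (i+1) := h6
        _ = Real.exp (-(δ * (i:ℝ)^(-(1/4:ℝ)) * ((i:ℝ)+1))) := h7
        _ ≤ Real.exp (-(δ * (i:ℝ)^((3:ℝ)/4))) := h9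
        _ ≤ 27 / (δ * (i:ℝ)^((3:ℝ)/4))^3 := h10
        _ ≤ 27/δ^3 * (i:ℝ)^(-(2:ℝ)) := h11
  have hCsum : (∑' i, μ (Cset i)) ≠ ⊤ := by
    have hs2 : Summable (fun i : ℕ => 27/δ^3 * (i:ℝ) ^ (-(2:ℝ))) :=
      (Real.summable_nat_rpow.mpr (by norm_num)).mul_left _
    have hle : ∑' i, μ (Cset i) ≤ ENNReal.ofReal (∑' i : ℕ, 27/δ^3 * (i:ℝ)^(-(2:ℝ))) := by
      rw [ENNReal.ofReal_tsum_of_nonneg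
        (fun i => mul_nonneg (div_nonneg (by norm_num) (pow_nonneg hδ0.le 3))
          (Real.rpow_nonneg (Nat.cast_nonneg i) _)) hs2]
      exact Summable.tsum_le_tsum hCbound ENNReal.summable ENNReal.summable
    exact ne_top_of_le_ne_top ENNReal.ofReal_ne_top hle
  -- single point mass bound
  have hq : ∀ l (m : ℕ), 1 ≤ m →
      μ (K l ⁻¹' {m}) ≤ ENNReal.ofReal ((m:ℝ)^(-(5/4:ℝ))) := by
    intro l m hm
    have he : K l ⁻¹' ({m} : Set ℕ) = {ω | K l ω = m} := rfl
    rw [he, hdist l m hm]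
    exact ENNReal.ofReal_le_ofReal (div_le_self (hterm_nonneg m) hc1)
  -- the elementary tie events
  have hE : ∀ j i m : ℕ, i < j → 1 ≤ m →
      μ (⋂ l ∈ Finset.range (j+1),
          K l ⁻¹' (if l = i ∨ l = j then ({m} : Set ℕ) else Set.Iic m))
        ≤ ENNReal.ofReal ((m:ℝ)^(-(5/4:ℝ)))^2 * ENNReal.ofReal (F m)^(j-1) := by
    intro j i m hij hm
    rw [hindep.measure_inter_preimage_eq_mul (Finset.range (j+1))
      (sets := fun l => if l = i ∨ l = j then ({m} : Set ℕ) else Set.Iic m)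
      (fun l _ => by split
                     · exact measurableSet_singleton m
                     · exact measurableSet_Iic)]
    have hiS : i ∈ Finset.range (j+1) := Finset.mem_range.mpr (by omega)
    have hjS : j ∈ (Finset.range (j+1)).erase i :=
      Finset.mem_erase.mpr ⟨by omega, Finset.mem_range.mpr (by omega)⟩
    rw [← Finset.mul_prod_erase _ _ hiS, ← Finset.mul_prod_erase _ _ hjS]
    have hprod : (∏ l ∈ ((Finset.range (j+1)).erase i).erase j,
        μ (K l ⁻¹' (if l = i ∨ l = j then ({m} : Set ℕ) else Set.Iic m)))
        = ENNReal.ofReal (F m) ^ (j-1) := by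
      calc (∏ l ∈ ((Finset.range (j+1)).erase i).erase j,
              μ (K l ⁻¹' (if l = i ∨ l = j then ({m} : Set ℕ) else Set.Iic m)))
          = ∏ _l ∈ ((Finset.range (j+1)).erase i).erase j, ENNReal.ofReal (F m) := by
            refine Finset.prod_congr rfl (fun l hl => ?_)
            obtain ⟨hlj, hli, -⟩ : l ≠ j ∧ l ≠ i ∧ l ∈ Finset.range (j+1) := by
              simpa [Finset.mem_erase] using hl
            rw [if_neg (by tauto)]
            exact hcdf l m
        _ = ENNReal.ofReal (F m) ^ (j-1) := by
            rw [Finset.prod_const, Finset.card_erase_of_mem hjS,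
              Finset.card_erase_of_mem hiS, Finset.card_range]
            congr 1
    rw [hprod, if_pos (Or.inl rfl), if_pos (Or.inr rfl)]
    calc μ (K i ⁻¹' ({m} : Set ℕ)) * (μ (K j ⁻¹' ({m} : Set ℕ)) * ENNReal.ofReal (F m) ^ (j-1))
        ≤ ENNReal.ofReal ((m:ℝ)^(-(5/4:ℝ))) *
            (ENNReal.ofReal ((m:ℝ)^(-(5/4:ℝ))) * ENNReal.ofReal (F m) ^ (j-1)) :=
          mul_le_mul' (hq i m hm) (mul_le_mul' (hq j m hm) le_rfl)
      _ = ENNReal.ofReal ((m:ℝ)^(-(5/4:ℝ)))^2 * ENNReal.ofReal (F m)^(j-1) := by ring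
  -- B events
  set Bset : ℕ → Set Ω := fun j =>
    {ω | ∃ i < j, K i ω = K j ω ∧ ∀ l < j, K l ω ≤ K j ω} with hBdef
  have hBsub : ∀ j, Bset j ⊆ ⋃ i ∈ Finset.range j, ⋃ m : ℕ,
      ⋂ l ∈ Finset.range (j+1),
        K l ⁻¹' (if l = i ∨ l = j then ({m+1} : Set ℕ) else Set.Iic (m+1)) := by
    intro j ω hω
    obtain ⟨i, hij, heq, hle⟩ := hω
    simp only [Set.mem_iUnion, Finset.mem_range, exists_prop]
    refine ⟨i, hij, K j ω - 1, ?_⟩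
    have hKj : K j ω - 1 + 1 = K j ω := Nat.succ_pred_eq_of_pos (hpos j ω)
    simp only [Set.mem_iInter, Finset.mem_range]
    intro l hl
    by_cases hcase : l = i ∨ l = j
    · rw [if_pos hcase]
      simp only [Set.mem_preimage, Set.mem_singleton_iff, hKj]
      rcases hcase with h | h
      · rw [h]; exact heq
      · rw [h]
    · rw [if_neg hcase]
      simp only [Set.mem_preimage, Set.mem_Iic, hKj]
      push_neg at hcase
      exact hle l (by omega)
  set f : ℕ → ℕ → ℝ≥0∞ := fun j m => (j:ℝ≥0∞) *
      (ENNReal.ofReal (((m+1:ℕ):ℝ)^(-(5/4:ℝ)))^2 * ENNReal.ofReal (F (m+1))^(j-1)) with hfdef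
  have hBbound : ∀ j : ℕ, μ (Bset j) ≤ ∑' m : ℕ, f j m := by
    intro j
    calc μ (Bset j)
        ≤ μ (⋃ i ∈ Finset.range j, ⋃ m : ℕ, ⋂ l ∈ Finset.range (j+1),
            K l ⁻¹' (if l = i ∨ l = j then ({m+1} : Set ℕ) else Set.Iic (m+1))) :=
          measure_mono (hBsub j)
      _ ≤ ∑ i ∈ Finset.range j, μ (⋃ m : ℕ, ⋂ l ∈ Finset.range (j+1),
            K l ⁻¹' (if l = i ∨ l = j then ({m+1} : Set ℕ) else Set.Iic (m+1))) :=
          measure_biUnion_finset_le _ _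
      _ ≤ ∑ i ∈ Finset.range j, ∑' m : ℕ, μ (⋂ l ∈ Finset.range (j+1),
            K l ⁻¹' (if l = i ∨ l = j then ({m+1} : Set ℕ) else Set.Iic (m+1))) :=
          Finset.sum_le_sum (fun i _ => measure_iUnion_le _)
      _ ≤ ∑ _i ∈ Finset.range j, ∑' m : ℕ,
            (ENNReal.ofReal (((m+1:ℕ):ℝ)^(-(5/4:ℝ)))^2 * ENNReal.ofReal (F (m+1))^(j-1)) := by
          refine Finset.sum_le_sum (fun i hi => ?_)
          refine Summable.tsum_le_tsum (fun m => hE j i (m+1) (Finset.mem_range.mp hi) (by omega))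
            ENNReal.summable ENNReal.summable
      _ = ∑' m : ℕ, f j m := by
          rw [Finset.sum_const, Finset.card_range, nsmul_eq_mul, hfdef,
            ENNReal.tsum_mul_left]
  -- summing the B bounds
  have hFlt1 : ∀ m : ℕ, F (m+1) < 1 := by
    intro m
    have hmp : (0:ℝ) < ((m+1:ℕ):ℝ) := by positivity
    have hd : (0:ℝ) < δ * ((m+1:ℕ):ℝ)^(-(1/4:ℝ)) :=
      mul_pos hδ0 (Real.rpow_pos_of_pos hmp _)
    have hlb := htail_lb (m+1) (by omega)
    linarith
  have hkey : ∀ m : ℕ, (∑' j : ℕ, f j m) ≤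
      ENNReal.ofReal (4/δ^2 * ((m+1:ℕ):ℝ)^(-(2:ℝ))) := by
    intro m
    have hy0 : 0 ≤ F (m+1) := hF_nonneg _
    have hy1 : F (m+1) < 1 := hFlt1 m
    have hmp : (0:ℝ) < ((m+1:ℕ):ℝ) := by positivity
    have hd : (0:ℝ) < δ * ((m+1:ℕ):ℝ)^(-(1/4:ℝ)) :=
      mul_pos hδ0 (Real.rpow_pos_of_pos hmp _)
    have hlb := htail_lb (m+1) (by omega)
    have h1y : (0:ℝ) < 1 - F (m+1) := lt_of_lt_of_le hd hlb
    calc ∑' j : ℕ, f j m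
        = ENNReal.ofReal (((m+1:ℕ):ℝ)^(-(5/4:ℝ)))^2 *
            ∑' j : ℕ, (j:ℝ≥0∞) * ENNReal.ofReal (F (m+1)) ^ (j-1) := by
          rw [← ENNReal.tsum_mul_left]
          refine tsum_congr (fun j => ?_)
          rw [hfdef]; ring
      _ ≤ ENNReal.ofReal (((m+1:ℕ):ℝ)^(-(5/4:ℝ)))^2 *
            ENNReal.ofReal (2*(1 - F (m+1))⁻¹)^2 :=
          mul_le_mul' le_rfl (aux_geom hy0 hy1)
      _ = ENNReal.ofReal (((m+1:ℕ):ℝ)^(-(5/4:ℝ)) * (2*(1 - F (m+1))⁻¹)) ^ 2 := by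
          rw [ENNReal.ofReal_mul (hterm_nonneg _), mul_pow]
      _ ≤ ENNReal.ofReal (4/δ^2 * ((m+1:ℕ):ℝ)^(-(2:ℝ))) := by
          have hL0 : (0:ℝ) ≤ ((m+1:ℕ):ℝ)^(-(5/4:ℝ)) * (2*(1 - F (m+1))⁻¹) := by
            have := hterm_nonneg (m+1)
            have h2 : (0:ℝ) ≤ (1 - F (m+1))⁻¹ := inv_nonneg.mpr h1y.le
            positivity
          rw [← ENNReal.ofReal_pow hL0]
          apply ENNReal.ofReal_le_ofReal
          have hinv : (1 - F (m+1))⁻¹ ≤ δ⁻¹ * ((m+1:ℕ):ℝ)^((1:ℝ)/4) := by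
            have h := inv_anti₀ hd hlb
            have e : ((((m+1:ℕ):ℝ))^(-(1/4:ℝ)))⁻¹ = ((m+1:ℕ):ℝ)^((1:ℝ)/4) := by
              rw [show (-(1/4:ℝ)) = -((1:ℝ)/4) by norm_num, Real.rpow_neg hmp.le, inv_inv]
            rwa [mul_inv, e] at h
          have hstep : ((m+1:ℕ):ℝ)^(-(5/4:ℝ)) * (2*(1 - F (m+1))⁻¹)
              ≤ 2/δ * ((m+1:ℕ):ℝ)^(-(1:ℝ)) := by
            have hX : (0:ℝ) ≤ ((m+1:ℕ):ℝ)^(-(5/4:ℝ)) := hterm_nonneg (m+1)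
            calc ((m+1:ℕ):ℝ)^(-(5/4:ℝ)) * (2*(1 - F (m+1))⁻¹)
                ≤ ((m+1:ℕ):ℝ)^(-(5/4:ℝ)) * (2*(δ⁻¹ * ((m+1:ℕ):ℝ)^((1:ℝ)/4))) := by
                  apply mul_le_mul_of_nonneg_left _ hX
                  linarith
              _ = 2/δ * (((m+1:ℕ):ℝ)^(-(5/4:ℝ)) * ((m+1:ℕ):ℝ)^((1:ℝ)/4)) := by
                  field_simp
              _ = 2/δ * ((m+1:ℕ):ℝ)^(-(1:ℝ)) := by
                  rw [← Real.rpow_add hmp]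
                  norm_num
          calc (((m+1:ℕ):ℝ)^(-(5/4:ℝ)) * (2*(1 - F (m+1))⁻¹))^2
              ≤ (2/δ * ((m+1:ℕ):ℝ)^(-(1:ℝ)))^2 := pow_le_pow_left₀ hL0 hstep 2
            _ = 4/δ^2 * ((m+1:ℕ):ℝ)^(-(2:ℝ)) := by
                rw [mul_pow, ← Real.rpow_natCast (((m+1:ℕ):ℝ)^(-(1:ℝ))) 2,
                  ← Real.rpow_mul hmp.le, div_pow]
                norm_num
  have hBsum : (∑' j, μ (Bset j)) ≠ ⊤ := by
    have hsm : Summable (fun m : ℕ => 4/δ^2 * ((m+1:ℕ):ℝ)^(-(2:ℝ))) := by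
      apply Summable.mul_left
      exact_mod_cast (summable_nat_add_iff (f := fun k : ℕ => (k:ℝ)^(-(2:ℝ))) 1).mpr
        (Real.summable_nat_rpow.mpr (by norm_num))
    have hle : ∑' j, μ (Bset j) ≤
        ENNReal.ofReal (∑' m : ℕ, 4/δ^2 * ((m+1:ℕ):ℝ)^(-(2:ℝ))) := by
      calc ∑' j, μ (Bset j) ≤ ∑' j, ∑' m, f j m :=
            Summable.tsum_le_tsum hBbound ENNReal.summable ENNReal.summable
        _ = ∑' m, ∑' j, f j m := ENNReal.tsum_comm
        _ ≤ ∑' m : ℕ, ENNReal.ofReal (4/δ^2 * ((m+1:ℕ):ℝ)^(-(2:ℝ))) :=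
            Summable.tsum_le_tsum hkey ENNReal.summable ENNReal.summable
        _ = ENNReal.ofReal (∑' m : ℕ, 4/δ^2 * ((m+1:ℕ):ℝ)^(-(2:ℝ))) := by
            refine (ENNReal.ofReal_tsum_of_nonneg (fun m => ?_) hsm).symm
            have : (0:ℝ) ≤ 4/δ^2 := div_nonneg (by norm_num) (pow_nonneg hδ0.le 2)
            exact mul_nonneg this (Real.rpow_nonneg (Nat.cast_nonneg _) _)
    exact ne_top_of_le_ne_top ENNReal.ofReal_ne_top hle
  -- Borel-Cantelli and conclusion
  have hBae := MeasureTheory.ae_eventually_notMem (μ := μ) hBsum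
  have hCae := MeasureTheory.ae_eventually_notMem (μ := μ) hCsum
  filter_upwards [hBae, hCae] with ω hB hC
  obtain ⟨N₁, hN₁⟩ := eventually_atTop.mp hB
  obtain ⟨N₂, hN₂⟩ := eventually_atTop.mp hC
  refine ⟨max N₁ N₂, fun i hi => ⟨?_, ?_⟩⟩
  · intro hrec
    refine ⟨hrec, fun j hj hns => ?_⟩
    by_contra hcon
    push_neg at hcon
    have h1 : K i ω ≤ K j ω := hns i hj
    have hBj : ω ∈ Bset j := by
      simp only [hBdef, Set.mem_setOf_eq]
      exact ⟨i, hj, le_antisymm h1 hcon, fun l hl => hns l hl⟩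
    exact hN₁ j (le_trans (le_trans (le_max_left N₁ N₂) hi) hj.le) hBj
  · have hCi := hN₂ i (le_trans (le_max_right N₁ N₂) hi)
    simp only [hCdef, Set.mem_setOf_eq] at hCi
    push_neg at hCi
    obtain ⟨l, hl, hgt⟩ := hCi
    exact ⟨l, hl, hgt⟩
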